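/- (The congruence underlying the convergence of the matrices M_{h,m} to M_{h,log} asserted after Definition 3.2 of the paper.) Let a ∈ O_L. Regard B and the C_j as matrices over L[[X]]; B is invertible over L[[X]] since det B = p. For m ≥ 1 set M_m := B^{−(m+1)}·C_m·C_{m−1}···C_1 ∈ M₂(L[[X]]). Then for every m ≥ 1, all four entries of p^{m+2}·(M_{m+1} − M_m) lie in ω_m·O_L[[X]]. -/

import Mathlib

/-!
Setting: `p ≥ 5` a prime, `𝕆` the ring of integers of a finite extension `L` of
`ℚ_p` (modelled as a characteristic-zero discrete valuation ring with uniformizer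
`ϖ ∣ p`), and `K` its fraction field (playing the role of `L`).
-/

open PowerSeries

/-- `ω_m = (1+X)^{p^m} − 1`. -/
noncomputable def omegaPS (p : ℕ) (R : Type*) [CommRing R] (m : ℕ) : PowerSeries R :=
  (1 + PowerSeries.X) ^ (p ^ m) - 1

/-- `Φ_m = Σ_{i<p} (1+X)^{i·p^{m−1}}` (meaningful for `m ≥ 1`). -/
noncomputable def PhiPS (p : ℕ) (R : Type*) [CommRing R] (m : ℕ) : PowerSeries R :=
  ∑ i ∈ Finset.range p, (1 + PowerSeries.X) ^ (i * p ^ (m - 1))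

/-- The matrix `C_j = ((a, 1), (−Φ_j, 0))`. -/
noncomputable def Cmat (p : ℕ) (R : Type*) [CommRing R] (a : R) (j : ℕ) :
    Matrix (Fin 2) (Fin 2) (PowerSeries R) :=
  !![PowerSeries.C (R := R) a, 1; -(PhiPS p R j), 0]

/-- The matrix `B = ((a, 1), (−p, 0))`. -/
noncomputable def Bmat (p : ℕ) (R : Type*) [CommRing R] (a : R) :
    Matrix (Fin 2) (Fin 2) (PowerSeries R) :=
  !![PowerSeries.C (R := R) a, 1; -(p : PowerSeries R), 0]

/-- `H_m = C_m · C_{m−1} ⋯ C_1` (with `H_0 = 1`). -/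
noncomputable def Hmat (p : ℕ) (R : Type*) [CommRing R] (a : R) :
    ℕ → Matrix (Fin 2) (Fin 2) (PowerSeries R)
  | 0 => 1
  | m + 1 => Cmat p R a (m + 1) * Hmat p R a m

/-- `M_m = B^{−(m+1)}·C_m·C_{m−1}⋯C_1`, over `K⟦X⟧`. -/
noncomputable def Mmat (p : ℕ) (K : Type*) [Field K] (a : K) (m : ℕ) :
    Matrix (Fin 2) (Fin 2) (PowerSeries K) :=
  (Bmat p K a)⁻¹ ^ (m + 1) * Hmat p K a m

section Aux

open Matrix

variable {R S : Type*} [CommRing R] [CommRing S]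

private lemma map_omegaPS (f : R →+* S) (p m : ℕ) :
    PowerSeries.map f (omegaPS p R m) = omegaPS p S m := by
  simp [omegaPS]

private lemma map_PhiPS (f : R →+* S) (p j : ℕ) :
    PowerSeries.map f (PhiPS p R j) = PhiPS p S j := by
  simp [PhiPS]

private lemma map_Cmat (f : R →+* S) (p : ℕ) (a : R) (j : ℕ) :
    (PowerSeries.map f).mapMatrix (Cmat p R a j) = Cmat p S (f a) j := by
  ext i k
  fin_cases i <;> fin_cases k <;>
    simp [Cmat, RingHom.mapMatrix_apply, Matrix.map_apply, map_PhiPS]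

private lemma map_Hmat (f : R →+* S) (p : ℕ) (a : R) (n : ℕ) :
    (PowerSeries.map f).mapMatrix (Hmat p R a n) = Hmat p S (f a) n := by
  induction n with
  | zero => simp [Hmat]
  | succ n ih =>
    show (PowerSeries.map f).mapMatrix (Cmat p R a (n+1) * Hmat p R a n) = _
    rw [_root_.map_mul, map_Cmat, ih]
    rfl

/-- The geometric-series factorization `Φ_{m+1} − p = ω_m · E`. -/
private lemma Phi_sub_p (p : ℕ) (m : ℕ) :
    PhiPS p R (m + 1) - (p : PowerSeries R) =
      omegaPS p R m *
        ∑ i ∈ Finset.range p, ∑ k ∈ Finset.range i,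
          ((1 + PowerSeries.X : PowerSeries R) ^ (p ^ m)) ^ k := by
  have hp' : (p : PowerSeries R) = ∑ _i ∈ Finset.range p, (1 : PowerSeries R) := by
    simp
  rw [PhiPS, hp', ← Finset.sum_sub_distrib, Finset.mul_sum]
  refine Finset.sum_congr rfl fun i _ => ?_
  have h1 : i * p ^ (m + 1 - 1) = i * p ^ m := by norm_num
  rw [h1, mul_comm i (p ^ m), pow_mul, ← geom_sum_mul, omegaPS]
  ring

end Aux

/-- the congruence underlying the convergence of the matrices
`M_{h,m}` to `M_{h,log}`: for every `m ≥ 1`, all four entries of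
`p^{m+2}·(M_{m+1} − M_m)` lie in `ω_m·𝕆⟦X⟧` (inside `K⟦X⟧`, where `K` is the
fraction field of `𝕆`). -/
theorem Mlog_convergence_congruence
    (p : ℕ) (hp : p.Prime) (hp5 : 5 ≤ p)
    (𝕆 : Type*) [CommRing 𝕆] [IsDomain 𝕆] [IsDiscreteValuationRing 𝕆] [CharZero 𝕆]
    (ϖ : 𝕆) (hϖ : Irreducible ϖ) (hpϖ : ϖ ∣ (p : 𝕆))
    (K : Type*) [Field K] [Algebra 𝕆 K] [IsFractionRing 𝕆 K]
    (a : 𝕆) (m : ℕ) (hm : 1 ≤ m) :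
    ∀ i j : Fin 2, ∃ g : PowerSeries 𝕆,
      (p : PowerSeries K) ^ (m + 2) *
          (Mmat p K (algebraMap 𝕆 K a) (m + 1) - Mmat p K (algebraMap 𝕆 K a) m) i j
        = omegaPS p K m * (g.map (algebraMap 𝕆 K)) := by
  classical
  haveI : CharZero K := (RingHom.charZero_iff (IsFractionRing.injective 𝕆 K)).mp inferInstance
  have hp0 : (p : K) ≠ 0 := Nat.cast_ne_zero.mpr hp.ne_zero
  -- `B` is invertible over `K⟦X⟧`
  have hdet : (Bmat p K (algebraMap 𝕆 K a)).det = (p : PowerSeries K) := by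
    simp [Bmat, Matrix.det_fin_two_of]
  have hpu : IsUnit ((p : PowerSeries K)) := by
    rw [PowerSeries.isUnit_iff_constantCoeff]
    simpa using isUnit_iff_ne_zero.mpr hp0
  have hdetu : IsUnit (Bmat p K (algebraMap 𝕆 K a)).det := hdet ▸ hpu
  -- `p • B⁻¹ = adjugate B`
  have hadj : (p : PowerSeries K) • (Bmat p K (algebraMap 𝕆 K a))⁻¹
      = (Bmat p K (algebraMap 𝕆 K a)).adjugate := by
    rw [Matrix.inv_def, hdet, smul_smul, Ring.mul_inverse_cancel _ hpu, one_smul]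
  -- the adjugate over `𝕆`
  have hadjmap : (PowerSeries.map (algebraMap 𝕆 K)).mapMatrix
        (!![0, -1; (p : PowerSeries 𝕆), PowerSeries.C (R := 𝕆) a])
      = (Bmat p K (algebraMap 𝕆 K a)).adjugate := by
    rw [Bmat, Matrix.adjugate_fin_two_of]
    ext i k
    fin_cases i <;> fin_cases k <;>
      simp [RingHom.mapMatrix_apply, Matrix.map_apply]
  -- the key matrix identity over `K`
  have h1 : PhiPS p K (m + 1) - (p : PowerSeries K) =
      omegaPS p K m * PowerSeries.map (algebraMap 𝕆 K)
        (∑ i ∈ Finset.range p, ∑ k ∈ Finset.range i,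
          ((1 + PowerSeries.X : PowerSeries 𝕆) ^ (p ^ m)) ^ k) := by
    rw [← map_PhiPS (algebraMap 𝕆 K) p (m + 1), ← map_omegaPS (algebraMap 𝕆 K) p m,
      ← _root_.map_mul, ← Phi_sub_p p m]
    simp
  have hCB : Cmat p K (algebraMap 𝕆 K a) (m + 1) - Bmat p K (algebraMap 𝕆 K a) =
      omegaPS p K m • (PowerSeries.map (algebraMap 𝕆 K)).mapMatrix
        (!![0, 0; -(∑ i ∈ Finset.range p, ∑ k ∈ Finset.range i,
          ((1 + PowerSeries.X : PowerSeries 𝕆) ^ (p ^ m)) ^ k), 0]) := by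
    refine Matrix.ext fun i k => ?_
    fin_cases i <;> fin_cases k
    · simp [Cmat, Bmat]
    · simp [Cmat, Bmat]
    · simp only [Cmat, Bmat, Matrix.sub_apply, Matrix.smul_apply, RingHom.mapMatrix_apply,
        Matrix.map_apply, Matrix.cons_val', Matrix.cons_val_zero, Matrix.cons_val_one,
        Matrix.head_cons, Matrix.head_fin_const, Matrix.empty_val', Matrix.cons_val_fin_one,
        Matrix.of_apply, smul_eq_mul, map_neg, Fin.mk_zero, Fin.mk_one, Fin.isValue]
      linear_combination -h1
    · simp [Cmat, Bmat]
  -- `B⁻¹ ^ (m+2) * B = B⁻¹ ^ (m+1)`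
  have hpow : ((Bmat p K (algebraMap 𝕆 K a))⁻¹) ^ (m + 2) * Bmat p K (algebraMap 𝕆 K a)
      = ((Bmat p K (algebraMap 𝕆 K a))⁻¹) ^ (m + 1) := by
    rw [pow_succ, mul_assoc, Matrix.nonsing_inv_mul _ hdetu, mul_one]
  have hMm1 : Mmat p K (algebraMap 𝕆 K a) (m + 1) =
      ((Bmat p K (algebraMap 𝕆 K a))⁻¹) ^ (m + 2) *
        (Cmat p K (algebraMap 𝕆 K a) (m + 1) * Hmat p K (algebraMap 𝕆 K a) m) := rfl
  have hMm : Mmat p K (algebraMap 𝕆 K a) m =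
      ((Bmat p K (algebraMap 𝕆 K a))⁻¹) ^ (m + 2) *
        (Bmat p K (algebraMap 𝕆 K a) * Hmat p K (algebraMap 𝕆 K a) m) := by
    show ((Bmat p K (algebraMap 𝕆 K a))⁻¹) ^ (m + 1) * Hmat p K (algebraMap 𝕆 K a) m = _
    rw [← hpow, mul_assoc]
  -- the main computation
  have hmain : (p : PowerSeries K) ^ (m + 2) •
      (Mmat p K (algebraMap 𝕆 K a) (m + 1) - Mmat p K (algebraMap 𝕆 K a) m)
      = omegaPS p K m • (PowerSeries.map (algebraMap 𝕆 K)).mapMatrix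
          ((!![0, -1; (p : PowerSeries 𝕆), PowerSeries.C (R := 𝕆) a]) ^ (m + 2) *
            ((!![0, 0; -(∑ i ∈ Finset.range p, ∑ k ∈ Finset.range i,
              ((1 + PowerSeries.X : PowerSeries 𝕆) ^ (p ^ m)) ^ k), 0]) * Hmat p 𝕆 a m)) := by
    rw [hMm1, hMm, ← mul_sub, ← sub_mul, ← smul_mul_assoc, ← smul_pow, hadj, hCB,
      smul_mul_assoc, mul_smul_comm, _root_.map_mul, _root_.map_mul, map_pow, hadjmap,
      map_Hmat]
  intro i j
  refine ⟨((!![0, -1; (p : PowerSeries 𝕆), PowerSeries.C (R := 𝕆) a]) ^ (m + 2) *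
            ((!![0, 0; -(∑ i ∈ Finset.range p, ∑ k ∈ Finset.range i,
              ((1 + PowerSeries.X : PowerSeries 𝕆) ^ (p ^ m)) ^ k), 0]) * Hmat p 𝕆 a m)) i j, ?_⟩
  have := congrFun (congrFun hmain i) j
  simpa only [Matrix.smul_apply, smul_eq_mul, RingHom.mapMatrix_apply, Matrix.map_apply]
    using this
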